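/- arXiv:2401.04946 — 2 statements merged into one kernel-verified Lean document; each statement's English description precedes it below -/
import Mathlib

section
/- Suppose ‖u''(t)‖ ≤ C t^{σ−2} for t > 0 with σ > 0. Then on the graded mesh t_n = (nτ)^γ with γ ≥ 1, for every n ≥ 1 the linear interpolation error satisfies ‖u − u_I‖_{L^∞(I_n)} ≤ C' · τ^{min(γσ, 2)} · t_n^{max(0, σ − 2/γ)} for a constant C' independent of n and τ. -/
open MeasureTheory Set Filter Topology

section helpers

variable {X : Type*} [NormedAddCommGroup X] [NormedSpace ℝ X]

lemma my_cmp {f f' : ℝ → X} {φ φ' : ℝ → ℝ} {a b : ℝ} (hab : a ≤ b)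
    (hf : ∀ x ∈ Icc a b, HasDerivAt f (f' x) x)
    (hφ : ∀ x ∈ Icc a b, HasDerivAt φ (φ' x) x)
    (hbd : ∀ x ∈ Icc a b, ‖f' x‖ ≤ φ' x) :
    ‖f b - f a‖ ≤ φ b - φ a := by
  have H := image_norm_le_of_norm_deriv_right_le_deriv_boundary'
    (f := fun x => f x - f a) (f' := f') (a := a) (b := b) (B := fun x => φ x - φ a) (B' := φ')
    (ContinuousOn.sub (fun x hx => (hf x hx).continuousAt.continuousWithinAt) continuousOn_const)
    (fun x hx => (((hf x (Ico_subset_Icc_self hx)).sub_const (f a)).hasDerivWithinAt))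
    (by simp)
    (ContinuousOn.sub (fun x hx => (hφ x hx).continuousAt.continuousWithinAt) continuousOn_const)
    (fun x hx => (((hφ x (Ico_subset_Icc_self hx)).sub_const (φ a)).hasDerivWithinAt))
    (fun x hx => hbd x (Ico_subset_Icc_self hx))
  have := H (right_mem_Icc.2 hab)
  linarith [this]

lemma my_cmp_rpow {f f' : ℝ → X} {a b K q : ℝ} (ha : 0 < a) (hab : a ≤ b)
    (hf : ∀ x ∈ Icc a b, HasDerivAt f (f' x) x)
    (hbd : ∀ x ∈ Icc a b, ‖f' x‖ ≤ K * x ^ (q - 1)) (hq : q ≠ 0) :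
    ‖f b - f a‖ ≤ K / q * b ^ q - K / q * a ^ q := by
  have := my_cmp (φ := fun s => K / q * s ^ q) (φ' := fun s => K * s ^ (q - 1)) hab hf
    (fun x hx => by
      have hx0 : x ≠ 0 := (lt_of_lt_of_le ha hx.1).ne'
      have h := (Real.hasDerivAt_rpow_const (p := q) (Or.inl hx0)).const_mul (K / q)
      refine h.congr_deriv ?_
      rw [← mul_assoc, div_mul_cancel₀ K hq]) hbd
  exact this

lemma my_decomp (x y z v : X) {lam mu ta tb : ℝ} (h1 : lam + mu = 1)
    (h2 : lam * ta + mu * tb = 0) :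
    x - (lam • y + mu • z) = lam • (x - y - ta • v) + mu • (x - z - tb • v) := by
  have h2' : (lam * ta) • v + (mu * tb) • v = (0 : X) := by rw [← add_smul, h2, zero_smul]
  have hx : lam • x + mu • x = x := by rw [← add_smul, h1, one_smul]
  calc x - (lam • y + mu • z)
      = lam • x + mu • x - (lam • y + mu • z) - ((lam * ta) • v + (mu * tb) • v) := by
        rw [hx, h2', sub_zero]
    _ = lam • (x - y - ta • v) + mu • (x - z - tb • v) := by
        simp only [smul_sub, smul_smul]; abel

end helpers

set_option maxHeartbeats 1600000 in
/-- On the graded mesh `t_n = (nτ)^γ`, if `‖u''(t)‖ ≤ C t^{σ-2}` for `t > 0`, then the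
piecewise-linear interpolation error satisfies
`‖u - u_I‖_{L^∞(I_n)} ≤ C' τ^{min(γσ,2)} t_n^{max(0, σ - 2/γ)}` with `C'` independent
of `n` and `τ`. -/
theorem graded_mesh_interp_error {X : Type*} [NormedAddCommGroup X]
    [NormedSpace ℝ X] [CompleteSpace X]
    (γ σ C : ℝ) (hγ : 1 ≤ γ) (hσ : 0 < σ) (hC : 0 < C)
    (u u' u'' : ℝ → X)
    (hu0 : ContinuousOn u (Ici 0)
    )
    (hu : ∀ t, 0 < t → HasDerivAt u (u' t) t)
    (hu' : ∀ t, 0 < t → HasDerivAt u' (u'' t) t)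
    (hbound : ∀ t, 0 < t → ‖u'' t‖ ≤ C * t ^ (σ - 2)) :
    ∃ C' > 0, ∀ τ : ℝ, 0 < τ → ∀ n : ℕ, 1 ≤ n →
      ∀ t ∈ Icc ((((n - 1 : ℕ) : ℝ) * τ) ^ γ) (((n : ℝ) * τ) ^ γ),
        ‖u t - (((((n : ℝ) * τ) ^ γ - t) / (((n : ℝ) * τ) ^ γ - (((n - 1 : ℕ) : ℝ) * τ) ^ γ))
              • u ((((n - 1 : ℕ) : ℝ) * τ) ^ γ)
            + ((t - (((n - 1 : ℕ) : ℝ) * τ) ^ γ) / (((n : ℝ) * τ) ^ γ - (((n - 1 : ℕ) : ℝ) * τ) ^ γ))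
              • u (((n : ℝ) * τ) ^ γ))‖
          ≤ C' * τ ^ (min (γ * σ) 2) * ((((n : ℝ) * τ) ^ γ) ^ (max 0 (σ - 2 / γ))) := by
  have hγ0 : (0:ℝ) < γ := lt_of_lt_of_le one_pos hγ
  set e : ℝ := min σ 1 / 2 with he
  have hmin : 0 < min σ 1 := lt_min hσ one_pos
  have he0 : 0 < e := by rw [he]; linarith
  have he1 : e < 1 := by
    have : min σ 1 ≤ 1 := min_le_right _ _
    rw [he]; linarith
  have heσ : e < σ := by
    have : min σ 1 ≤ σ := min_le_left _ _
    rw [he]; linarith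
  refine ⟨C/σ + 2*C + γ^2*4^γ*C + 1, by positivity, ?_⟩
  intro τ hτ n hn t ht
  set d : ℝ := ((n-1 : ℕ):ℝ) * τ with hd
  set c : ℝ := (n:ℝ) * τ with hc
  set a := d ^ γ with ha
  set b := c ^ γ with hb
  have hn1R : (1:ℝ) ≤ (n:ℝ) := by exact_mod_cast hn
  have hd0 : 0 ≤ d := by positivity
  have hc0 : 0 < c := by
    have : (0:ℝ) < (n:ℝ) := by linarith
    exact mul_pos this hτ
  have hdc : d < c := by
    have : ((n-1:ℕ):ℝ) < (n:ℝ) := by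
      exact_mod_cast Nat.sub_lt (by omega) one_pos
    exact mul_lt_mul_of_pos_right this hτ
  have hab : a < b := Real.rpow_lt_rpow hd0 hdc hγ0
  have hb0 : 0 < b := Real.rpow_pos_of_pos hc0 γ
  have ha0 : 0 ≤ a := Real.rpow_nonneg hd0 γ
  have hL : (0:ℝ) < b - a := sub_pos.2 hab
  set lam := (b - t)/(b - a) with hlam
  set mu := (t - a)/(b - a) with hmu
  have h1 : lam + mu = 1 := by rw [hlam, hmu]; field_simp; ring
  have h2 : lam * (t - a) + mu * (t - b) = 0 := by
    rw [hlam, hmu]; field_simp; ring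
  have hlam0 : 0 ≤ lam := div_nonneg (by linarith [ht.2]) hL.le
  have hmu0 : 0 ≤ mu := div_nonneg (by linarith [ht.1]) hL.le
  have hlam1 : lam ≤ 1 := by rw [hlam, div_le_one hL]; linarith [ht.1]
  have hmu1 : mu ≤ 1 := by rw [hmu, div_le_one hL]; linarith [ht.2]
  have hRHS0 : 0 ≤ (C/σ + 2*C + γ^2*4^γ*C + 1) * τ ^ (min (γ * σ) 2) * (b ^ (max 0 (σ - 2 / γ))) := by
    positivity
  rw [my_decomp (u t) (u a) (u b) (u' t) h1 h2]
  have hnorm : ‖lam • (u t - u a - (t-a) • u' t) + mu • (u t - u b - (t-b) • u' t)‖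
      ≤ lam * ‖u t - u a - (t-a) • u' t‖ + mu * ‖u t - u b - (t-b) • u' t‖ := by
    refine (norm_add_le _ _).trans ?_
    rw [norm_smul, norm_smul, Real.norm_of_nonneg hlam0, Real.norm_of_nonneg hmu0]
  refine hnorm.trans ?_
  rcases eq_or_lt_of_le ht.1 with hta | hta
  · -- t = a : everything vanishes
    have hA0 : u t - u a - (t - a) • u' t = 0 := by rw [← hta]; simp
    have hmu' : mu = 0 := by rw [hmu, ← hta]; simp
    rw [hA0, hmu', norm_zero, mul_zero, zero_mul, add_zero]
    exact hRHS0
  have hT : 0 < t := lt_of_le_of_lt ha0 hta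
  have hγmax : γ * max 0 (σ - 2/γ) = max 0 (γ*σ - 2) := by
    rcases le_total (σ - 2/γ) 0 with h | h
    · rw [max_eq_left h, max_eq_left, mul_zero]
      have : σ ≤ 2/γ := by linarith
      have := mul_le_mul_of_nonneg_left this hγ0.le
      rw [mul_div_cancel₀ _ hγ0.ne'] at this
      linarith
    · rw [max_eq_right h, max_eq_right, mul_sub, mul_div_cancel₀ _ hγ0.ne']
      have := mul_le_mul_of_nonneg_left h hγ0.le
      rw [mul_sub, mul_div_cancel₀ _ hγ0.ne', mul_zero] at this
      linarith
  rcases eq_or_lt_of_le hn with hn1 | hn2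
  · -- case n = 1
    have hn1' : n = 1 := hn1.symm
    subst hn1'
    have hd' : d = 0 := by rw [hd]; norm_num
    have ha' : a = 0 := by rw [ha, hd', Real.zero_rpow hγ0.ne']
    have hc' : c = τ := by rw [hc]; norm_num
    have htb : t ≤ b := ht.2
    -- bound on the A part
    have hAbound : ‖u t - u a - (t-a) • u' t‖ ≤ C/σ * t^σ := by
      simp only [ha', sub_zero]
      have hHd : ∀ s : ℝ, 0 < s → HasDerivAt (fun s => u s - u 0 - s • u' s) (-(s • u'' s)) s := by
        intro s hs
        have h1 := (hu s hs).sub_const (u 0)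
        have h2 := (hasDerivAt_id s).smul (hu' s hs)
        have h3 := h1.sub h2
        refine h3.congr_deriv ?_
        simp only [id, one_smul]
        abel
      have step : ∀ ε ∈ Ioc (0:ℝ) t,
          ‖u t - u 0 - t • u' t‖ ≤ ‖u ε - u 0 - ε • u' ε‖ + C/σ * t^σ := by
        intro ε hε
        have hcmp := my_cmp_rpow (f := fun s => u s - u 0 - s • u' s)
          (f' := fun s => -(s • u'' s)) (a := ε) (b := t) (K := C) (q := σ) hε.1 hε.2
          (fun x hx => hHd x (lt_of_lt_of_le hε.1 hx.1))
          (fun x hx => by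
            have hx0 : 0 < x := lt_of_lt_of_le hε.1 hx.1
            rw [norm_neg, norm_smul, Real.norm_of_nonneg hx0.le]
            calc x * ‖u'' x‖ ≤ x * (C * x^(σ-2)) :=
                mul_le_mul_of_nonneg_left (hbound x hx0) hx0.le
              _ = C * x^(σ-1) := by
                  rw [show σ-1 = 1 + (σ-2) by ring, Real.rpow_add hx0, Real.rpow_one]; ring)
          hσ.ne'
        have hε0 : 0 ≤ C/σ * ε^σ :=
          mul_nonneg (by positivity) (Real.rpow_nonneg hε.1.le _)
        have htri : ‖u t - u 0 - t • u' t‖ ≤ ‖u ε - u 0 - ε • u' ε‖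
            + ‖(u t - u 0 - t • u' t) - (u ε - u 0 - ε • u' ε)‖ := by
          have : u t - u 0 - t • u' t
              = (u ε - u 0 - ε • u' ε) + ((u t - u 0 - t • u' t) - (u ε - u 0 - ε • u' ε)) := by
            abel
          conv_lhs => rw [this]
          exact norm_add_le _ _
        calc ‖u t - u 0 - t • u' t‖
            ≤ ‖u ε - u 0 - ε • u' ε‖ + ‖(u t - u 0 - t • u' t) - (u ε - u 0 - ε • u' ε)‖ := htri
          _ ≤ ‖u ε - u 0 - ε • u' ε‖ + (C/σ * t^σ - C/σ * ε^σ) := by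
              have := hcmp; linarith
          _ ≤ ‖u ε - u 0 - ε • u' ε‖ + C/σ * t^σ := by linarith
      -- limits
      have h_uu : Tendsto u (𝓝[>] (0:ℝ)) (𝓝 (u 0)) :=
        (hu0 0 self_mem_Ici).mono Ioi_subset_Ici_self
      have h_su : Tendsto (fun ε : ℝ => ε • u' ε) (𝓝[>] (0:ℝ)) (𝓝 0) := by
        set K := C * b^(σ - e) with hK
        have hK0 : 0 ≤ K := by positivity
        have hg : ∀ ε ∈ Ioc (0:ℝ) t, ‖ε • u' ε‖ ≤ ε * ‖u' t‖ + 2*K*ε^e := by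
          intro ε hε
          have hud : ‖u' t - u' ε‖ ≤ 2*K*ε^(e-1) := by
            have hcmp := my_cmp_rpow (f := u') (f' := u'') (a := ε) (b := t)
              (K := K) (q := e - 1) hε.1 hε.2
              (fun x hx => hu' x (lt_of_lt_of_le hε.1 hx.1))
              (fun x hx => by
                have hx0 : 0 < x := lt_of_lt_of_le hε.1 hx.1
                have hxb : x ≤ b := le_trans hx.2 htb
                calc ‖u'' x‖ ≤ C * x^(σ-2) := hbound x hx0
                  _ ≤ K * x^(e-1-1) := by
                      rw [hK, show e-1-1 = e-2 by ring]
                      have hsplit : x^(σ-2) = x^(σ-e) * x^(e-2) := by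
                        rw [← Real.rpow_add hx0]; ring_nf
                      have hxe2 : (0:ℝ) ≤ x^(e-2) := Real.rpow_nonneg hx0.le _
                      have hxe : x^(σ-e) ≤ b^(σ-e) :=
                        Real.rpow_le_rpow hx0.le hxb (by linarith)
                      calc C * x^(σ-2) = (C * x^(e-2)) * x^(σ-e) := by
                            rw [hsplit]; ring
                        _ ≤ (C * x^(e-2)) * b^(σ-e) :=
                            mul_le_mul_of_nonneg_left hxe (by positivity)
                        _ = C * b^(σ-e) * x^(e-2) := by ring)
              (by intro h; linarith [sub_eq_zero.mp h])
            have hq : e - 1 < 0 := by linarith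
            have htq : (0:ℝ) ≤ t^(e-1) := Real.rpow_nonneg hT.le _
            have hεq : (0:ℝ) ≤ ε^(e-1) := Real.rpow_nonneg hε.1.le _
            have hrw : K/(e-1) * t^(e-1) - K/(e-1) * ε^(e-1)
                = (K * (ε^(e-1) - t^(e-1))) * (1/(1-e)) := by
              have hne : e - 1 ≠ 0 := by intro h; linarith [sub_eq_zero.mp h]
              have hne' : 1 - e ≠ 0 := by intro h; linarith [sub_eq_zero.mp h]
              field_simp
              ring
            have h5 : K * (ε^(e-1) - t^(e-1)) ≤ K * ε^(e-1) :=
              mul_le_mul_of_nonneg_left (sub_le_self _ htq) hK0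
            have h6 : (0:ℝ) ≤ 1/(1-e) := by
              have : (0:ℝ) < 1 - e := by linarith
              positivity
            have h7 : 1/(1-e) ≤ 2 := by
              rw [div_le_iff₀ (by linarith)]
              rw [he]
              have h8 : min σ 1 ≤ 1 := min_le_right _ _
              linarith
            calc ‖u' t - u' ε‖ ≤ K/(e-1) * t^(e-1) - K/(e-1) * ε^(e-1) := hcmp
              _ = (K * (ε^(e-1) - t^(e-1))) * (1/(1-e)) := hrw
              _ ≤ (K * ε^(e-1)) * (1/(1-e)) := mul_le_mul_of_nonneg_right h5 h6
              _ ≤ (K * ε^(e-1)) * 2 := mul_le_mul_of_nonneg_left h7 (mul_nonneg hK0 hεq)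
              _ = 2*K*ε^(e-1) := by ring
          have hue : ‖u' ε‖ ≤ ‖u' t‖ + ‖u' t - u' ε‖ := by
            have : u' ε = u' t - (u' t - u' ε) := by abel
            conv_lhs => rw [this]
            exact norm_sub_le _ _
          calc ‖ε • u' ε‖ = ε * ‖u' ε‖ := by
                rw [norm_smul, Real.norm_of_nonneg hε.1.le]
            _ ≤ ε * (‖u' t‖ + 2*K*ε^(e-1)) :=
                mul_le_mul_of_nonneg_left (le_trans hue (by linarith [hud])) hε.1.le
            _ = ε * ‖u' t‖ + 2*K*(ε * ε^(e-1)) := by ring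
            _ = ε * ‖u' t‖ + 2*K*ε^e := by
                rw [show ε * ε^(e-1) = ε^e by
                  rw [show e = 1 + (e-1) by ring, Real.rpow_add hε.1, Real.rpow_one]; ring_nf]
        have hgt : Tendsto (fun ε : ℝ => ε * ‖u' t‖ + 2*K*ε^e) (𝓝[>] (0:ℝ)) (𝓝 0) := by
          have t1 : Tendsto (fun ε : ℝ => ε * ‖u' t‖) (𝓝 (0:ℝ)) (𝓝 0) := by
            have := (continuous_mul_right (‖u' t‖)).tendsto (0:ℝ)
            simpa using this
          have t2 : Tendsto (fun ε : ℝ => 2*K*ε^e) (𝓝 (0:ℝ)) (𝓝 0) := by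
            have hC2 : ContinuousAt (fun x : ℝ => x ^ e) 0 :=
              Real.continuousAt_rpow_const 0 e (Or.inr he0.le)
            have := (hC2.tendsto).const_mul (2*K)
            simpa [Real.zero_rpow he0.ne'] using this
          have := (t1.add t2)
          simp only [add_zero] at this
          exact this.mono_left nhdsWithin_le_nhds
        exact squeeze_zero_norm' (Filter.eventually_of_mem (Ioc_mem_nhdsGT hT) hg) hgt
      have hHlim : Tendsto (fun ε : ℝ => ‖u ε - u 0 - ε • u' ε‖ + C/σ * t^σ)
          (𝓝[>] (0:ℝ)) (𝓝 (0 + C/σ * t^σ)) := by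
        have hH0 : Tendsto (fun ε : ℝ => u ε - u 0 - ε • u' ε) (𝓝[>] (0:ℝ)) (𝓝 0) := by
          have := (h_uu.sub_const (u 0)).sub h_su
          simpa using this
        have := hH0.norm
        simp only [norm_zero] at this
        exact this.add_const _
      have := ge_of_tendsto hHlim
        (Filter.eventually_of_mem (Ioc_mem_nhdsGT hT) step)
      linarith
    -- bound on the B part
    have hBbound : mu * ‖u t - u b - (t-b) • u' t‖ ≤ 2*C*b^σ := by
      set K1 := C * b^(σ - e + 1) with hK1
      have hK10 : 0 ≤ K1 := by positivity
      have hpb : u b - u b + (b - b) • u' b = 0 := by simp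
      have hpd : ∀ s ∈ Icc t b, HasDerivAt (fun s => u s - u b + (b - s) • u' s)
          ((b - s) • u'' s) s := by
        intro s hs
        have hs0 : 0 < s := lt_of_lt_of_le hT hs.1
        have h1 := (hu s hs0).sub_const (u b)
        have h2 := ((hasDerivAt_id s).const_sub b).smul (hu' s hs0)
        have h3 := h1.add h2
        refine h3.congr_deriv ?_
        simp only [id, neg_smul, one_smul]
        abel
      have hcmp := my_cmp_rpow (f := fun s => u s - u b + (b - s) • u' s)
        (f' := fun s => (b - s) • u'' s) (a := t) (b := b) (K := K1) (q := e - 1) hT htb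
        hpd
        (fun x hx => by
          have hx0 : 0 < x := lt_of_lt_of_le hT hx.1
          rw [norm_smul, Real.norm_of_nonneg (by linarith [hx.2] : (0:ℝ) ≤ b - x)]
          calc (b - x) * ‖u'' x‖ ≤ b * (C * x^(σ-2)) :=
                mul_le_mul (by linarith [hx.1]) (hbound x hx0) (norm_nonneg _) hb0.le
            _ ≤ K1 * x^(e-1-1) := by
                rw [hK1, show e-1-1 = e-2 by ring]
                have hsplit : x^(σ-2) = x^(σ-e) * x^(e-2) := by
                  rw [← Real.rpow_add hx0]; ring_nf
                have hpow : x^(σ-e) ≤ b^(σ-e) :=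
                  Real.rpow_le_rpow hx0.le hx.2 (by linarith)
                have hb1 : b^(σ-e+1) = b^(σ-e) * b := by
                  rw [Real.rpow_add hb0, Real.rpow_one]
                rw [hsplit, hb1]
                have hxe2 : (0:ℝ) ≤ x^(e-2) := Real.rpow_nonneg hx0.le _
                calc b * (C * (x^(σ-e) * x^(e-2)))
                    = (C * b * x^(e-2)) * x^(σ-e) := by ring
                  _ ≤ (C * b * x^(e-2)) * b^(σ-e) :=
                      mul_le_mul_of_nonneg_left hpow (by positivity)
                  _ = C * (b^(σ-e) * b) * x^(e-2) := by ring)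
        (by intro h; linarith [sub_eq_zero.mp h])
      -- norm of B via p
      have hq : e - 1 < 0 := by linarith
      have htq : (0:ℝ) ≤ t^(e-1) := Real.rpow_nonneg hT.le _
      have hbq : (0:ℝ) ≤ b^(e-1) := Real.rpow_nonneg hb0.le _
      have hBeq : u t - u b - (t-b) • u' t
          = (u t - u b + (b - t) • u' t) - (u b - u b + (b - b) • u' b) := by
        rw [hpb, sub_zero, show t - b = -(b-t) by ring, neg_smul, sub_neg_eq_add]
      have hpt : ‖u t - u b - (t-b) • u' t‖
          ≤ K1/(e-1) * b^(e-1) - K1/(e-1) * t^(e-1) := by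
        rw [hBeq, norm_sub_rev]
        exact hcmp
      have hq2 : K1/(e-1) * b^(e-1) - K1/(e-1) * t^(e-1) ≤ 2*K1*t^(e-1) := by
        have hrw : K1/(e-1) * b^(e-1) - K1/(e-1) * t^(e-1)
            = (K1 * (t^(e-1) - b^(e-1))) * (1/(1-e)) := by
          have hne : e - 1 ≠ 0 := by intro h; linarith [sub_eq_zero.mp h]
          have hne' : 1 - e ≠ 0 := by intro h; linarith [sub_eq_zero.mp h]
          field_simp
          ring
        rw [hrw]
        have h5 : K1 * (t^(e-1) - b^(e-1)) ≤ K1 * t^(e-1) :=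
              mul_le_mul_of_nonneg_left (sub_le_self _ hbq) hK10
        have h6 : (0:ℝ) ≤ 1/(1-e) := by
          have : (0:ℝ) < 1 - e := by linarith
          positivity
        have h7 : 1/(1-e) ≤ 2 := by
          rw [div_le_iff₀ (by linarith)]
          rw [he]
          have h8 : min σ 1 ≤ 1 := min_le_right _ _
          linarith
        calc (K1 * (t^(e-1) - b^(e-1))) * (1/(1-e))
            ≤ (K1 * t^(e-1)) * (1/(1-e)) := mul_le_mul_of_nonneg_right h5 h6
          _ ≤ (K1 * t^(e-1)) * 2 := mul_le_mul_of_nonneg_left h7 (mul_nonneg hK10 htq)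
          _ = 2*K1*t^(e-1) := by ring
      have hmu2 : mu = t/b := by rw [hmu, ha', sub_zero, sub_zero]
      have hbsplit : b^(σ-e+1) = b^(σ-e)*b := by
        rw [Real.rpow_add hb0, Real.rpow_one]
      have hte : t*t^(e-1) = t^e := by
        rw [show e = 1 + (e-1) by ring, Real.rpow_add hT, Real.rpow_one]
        ring_nf
      have htbe : t^e ≤ b^e := Real.rpow_le_rpow hT.le htb he0.le
      calc mu * ‖u t - u b - (t-b) • u' t‖
          ≤ (t/b) * (2*K1*t^(e-1)) := by
            rw [hmu2]
            exact mul_le_mul_of_nonneg_left (le_trans hpt hq2) (by positivity)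
        _ = 2*C*b^(σ-e)*t^e := by
            rw [hK1, hbsplit, ← hte]
            field_simp [hb0.ne']
        _ ≤ 2*C*b^(σ-e)*b^e := by
            have : (0:ℝ) ≤ 2*C*b^(σ-e) := by positivity
            exact mul_le_mul_of_nonneg_left htbe this
        _ = 2*C*b^σ := by
            rw [mul_assoc, ← Real.rpow_add hb0]
            norm_num
    -- combine for n = 1
    have hbτ : b = τ^γ := by rw [hb, hc']
    have hbσ : b^σ = τ^(γ*σ) := by rw [hbτ, ← Real.rpow_mul hτ.le]
    have hid : τ^(min (γ*σ) 2) * (b ^ max 0 (σ - 2/γ)) = τ^(γ*σ) := by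
      rw [hbτ, ← Real.rpow_mul hτ.le, hγmax, ← Real.rpow_add hτ]
      congr 1
      rcases le_total (γ*σ) 2 with h | h
      · rw [min_eq_left h, max_eq_left (by linarith)]; ring
      · rw [min_eq_right h, max_eq_right (by linarith)]; ring
    have htσb : t^σ ≤ b^σ := Real.rpow_le_rpow hT.le htb hσ.le
    have hAn : lam * ‖u t - u a - (t-a) • u' t‖ ≤ C/σ * b^σ := by
      have h0 : (0:ℝ) ≤ C/σ * t^σ := by positivity
      calc lam * ‖u t - u a - (t-a) • u' t‖ ≤ 1 * (C/σ * t^σ) :=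
            mul_le_mul hlam1 hAbound (norm_nonneg _) one_pos.le
        _ = C/σ * t^σ := one_mul _
        _ ≤ C/σ * b^σ := by
            have : (0:ℝ) ≤ C/σ := by positivity
            exact mul_le_mul_of_nonneg_left htσb this
    have hbσ0 : (0:ℝ) ≤ b^σ := Real.rpow_nonneg hb0.le _
    calc lam * ‖u t - u a - (t-a) • u' t‖ + mu * ‖u t - u b - (t-b) • u' t‖
        ≤ C/σ * b^σ + 2*C*b^σ := add_le_add hAn hBbound
      _ ≤ (C/σ + 2*C + γ^2*4^γ*C + 1) * b^σ := by
          have hz : (0:ℝ) ≤ γ^2*4^γ*C + 1 := by positivity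
          have hz' : (0:ℝ) ≤ (γ^2*4^γ*C + 1) * b^σ := mul_nonneg hz hbσ0
          have hsplitc : (C/σ + 2*C + γ^2*4^γ*C + 1) * b^σ
              = C/σ*b^σ + 2*C*b^σ + (γ^2*4^γ*C + 1)*b^σ := by ring
          linarith
      _ = (C/σ + 2*C + γ^2*4^γ*C + 1) * τ ^ (min (γ * σ) 2) * (b ^ max 0 (σ - 2/γ)) := by
          have hkey : τ ^ (min (γ*σ) 2) * (b ^ max 0 (σ - 2/γ)) = b^σ := hid.trans hbσ.symm
          rw [← hkey]
          ring
  · -- case n ≥ 2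
    have hn1R2 : (2:ℝ) ≤ (n:ℝ) := by exact_mod_cast hn2
    have hcastd : ((n-1:ℕ):ℝ) = (n:ℝ) - 1 := by
      push_cast [Nat.cast_sub hn]
      ring
    have hτd : τ ≤ d := by
      rw [hd, hcastd]
      have h : (1:ℝ) ≤ (n:ℝ) - 1 := by linarith
      calc τ = 1 * τ := (one_mul τ).symm
        _ ≤ ((n:ℝ)-1) * τ := mul_le_mul_of_nonneg_right h hτ.le
    have hd0' : 0 < d := lt_of_lt_of_le hτ hτd
    have hc2d : c ≤ 2*d := by
      rw [hc, hd, hcastd]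
      have h : (n:ℝ) ≤ 2*((n:ℝ)-1) := by linarith
      calc (n:ℝ)*τ ≤ (2*((n:ℝ)-1))*τ := mul_le_mul_of_nonneg_right h hτ.le
        _ = 2*(((n:ℝ)-1)*τ) := by ring
    have ha0' : 0 < a := Real.rpow_pos_of_pos hd0' γ
    have hτc : τ ≤ c := by
      rw [hc]; exact (le_mul_iff_one_le_left hτ).2 hn1R
    have h2γ : (0:ℝ) < (2:ℝ)^γ := Real.rpow_pos_of_pos two_pos γ
    have hb2a : b ≤ 2^γ * a := by
      calc b = c^γ := hb
        _ ≤ (2*d)^γ := Real.rpow_le_rpow hc0.le hc2d hγ0.le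
        _ = 2^γ * d^γ := Real.mul_rpow (by norm_num) hd0
        _ = 2^γ * a := by rw [ha]
    have h4γ : (4:ℝ)^γ = (2:ℝ)^(2*γ) := by
      rw [show (4:ℝ) = (2:ℝ)^(2:ℝ) by
        rw [show (2:ℝ) = ((2:ℕ):ℝ) by norm_num, Real.rpow_natCast]; norm_num]
      rw [← Real.rpow_mul (by norm_num)]
    have h14 : (1:ℝ) ≤ 4^γ := by
      calc (1:ℝ) = (4:ℝ)^(0:ℝ) := (Real.rpow_zero _).symm
        _ ≤ 4^γ := Real.rpow_le_rpow_of_exponent_le (by norm_num) hγ0.le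
    have hM : ∀ r ∈ Icc a b, ‖u'' r‖ ≤ C * 4^γ * b^(σ-2) := by
      intro r hr
      have hr0 : 0 < r := lt_of_lt_of_le ha0' hr.1
      refine (hbound r hr0).trans ?_
      rw [mul_assoc]
      refine mul_le_mul_of_nonneg_left ?_ hC.le
      rcases le_total (σ-2) 0 with hs2 | hs2
      · have e1 : r^(σ-2) ≤ a^(σ-2) :=
          Real.rpow_le_rpow_of_nonpos ha0' hr.1 hs2
        have hba' : b / 2^γ ≤ a := by
          rw [div_le_iff₀ h2γ]
          calc b ≤ 2^γ * a := hb2a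
            _ = a * 2^γ := mul_comm _ _
        have e2 : a^(σ-2) ≤ (b / 2^γ)^(σ-2) :=
          Real.rpow_le_rpow_of_nonpos (by positivity) hba' hs2
        have e3 : (b / 2^γ)^(σ-2) = b^(σ-2) * ((2:ℝ)^γ)^(-(σ-2)) := by
          rw [Real.div_rpow hb0.le h2γ.le, Real.rpow_neg h2γ.le, div_eq_mul_inv]
        have e4 : ((2:ℝ)^γ)^(-(σ-2)) = (2:ℝ)^(γ*(2-σ)) := by
          rw [← Real.rpow_mul (by norm_num : (0:ℝ) ≤ 2)]
          congr 1
          ring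
        have e5 : (2:ℝ)^(γ*(2-σ)) ≤ (2:ℝ)^(2*γ) :=
          Real.rpow_le_rpow_of_exponent_le one_le_two (by
            have h := mul_nonneg hγ0.le hσ.le
            have hexp : γ*(2-σ) = 2*γ - γ*σ := by ring
            linarith)
        have hb2 : (0:ℝ) ≤ b^(σ-2) := Real.rpow_nonneg hb0.le _
        calc r^(σ-2) ≤ (b/2^γ)^(σ-2) := le_trans e1 e2
          _ = b^(σ-2) * (2:ℝ)^(γ*(2-σ)) := by rw [e3, e4]
          _ ≤ b^(σ-2) * (2:ℝ)^(2*γ) := mul_le_mul_of_nonneg_left e5 hb2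
          _ = 4^γ * b^(σ-2) := by rw [h4γ]; ring
      · calc r^(σ-2) ≤ b^(σ-2) := Real.rpow_le_rpow hr0.le hr.2 hs2
          _ ≤ 4^γ * b^(σ-2) := by
              have hbn : (0:ℝ) ≤ b^(σ-2) := Real.rpow_nonneg hb0.le _
              exact le_mul_of_one_le_left hbn h14
    -- MVT bounds on the two remainder terms
    have hM0 : (0:ℝ) ≤ C * 4^γ * b^(σ-2) := by positivity
    have hud : ∀ s ∈ Icc a b, ‖u' s - u' t‖ ≤ (C * 4^γ * b^(σ-2)) * (b - a) := by
      intro s hs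
      have hds := Convex.norm_image_sub_le_of_norm_hasDerivWithin_le
        (f := u') (f' := u'')
        (fun x hx => (hu' x (lt_of_lt_of_le ha0' hx.1)).hasDerivWithinAt)
        hM (convex_Icc a b) ht hs
      refine hds.trans ?_
      rw [Real.norm_eq_abs]
      refine mul_le_mul_of_nonneg_left ?_ hM0
      rw [abs_le]
      constructor <;> [linarith [hs.1, hs.2, ht.1, ht.2]; linarith [hs.1, hs.2, ht.1, ht.2]]
    have hFa : ∀ x : ℝ, x ∈ Icc a b →
        HasDerivWithinAt (fun s => u s - s • u' t) (u' x - u' t) (Icc a b) x := by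
      intro x hx
      have h1 := hu x (lt_of_lt_of_le ha0' hx.1)
      have h2 := (hasDerivAt_id x).smul_const (u' t)
      have h3 := h1.sub h2
      simp only [one_smul] at h3
      exact h3.hasDerivWithinAt
    have hA2 : ‖u t - u a - (t-a) • u' t‖ ≤ (C * 4^γ * b^(σ-2)) * (b-a) * (b-a) := by
      have hds := Convex.norm_image_sub_le_of_norm_hasDerivWithin_le
        (f := fun s => u s - s • u' t) (f' := fun s => u' s - u' t)
        hFa hud (convex_Icc a b) (left_mem_Icc.2 hab.le) ht
      have heq : u t - u a - (t-a) • u' t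
          = (u t - t • u' t) - (u a - a • u' t) := by
        rw [sub_smul]; abel
      rw [heq]
      refine hds.trans ?_
      rw [Real.norm_eq_abs]
      refine mul_le_mul_of_nonneg_left ?_ (by positivity)
      rw [abs_le]
      constructor <;> [linarith [ht.1, ht.2, hab.le]; linarith [ht.1, ht.2, hab.le]]
    have hB2 : ‖u t - u b - (t-b) • u' t‖ ≤ (C * 4^γ * b^(σ-2)) * (b-a) * (b-a) := by
      have hds := Convex.norm_image_sub_le_of_norm_hasDerivWithin_le
        (f := fun s => u s - s • u' t) (f' := fun s => u' s - u' t)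
        hFa hud (convex_Icc a b) (right_mem_Icc.2 hab.le) ht
      have heq : u t - u b - (t-b) • u' t
          = (u t - t • u' t) - (u b - b • u' t) := by
        rw [sub_smul]; abel
      rw [heq]
      refine hds.trans ?_
      rw [Real.norm_eq_abs]
      refine mul_le_mul_of_nonneg_left ?_ (by positivity)
      rw [abs_le]
      constructor <;> [linarith [ht.1, ht.2, hab.le]; linarith [ht.1, ht.2, hab.le]]
    -- mesh width bound : b - a ≤ γ * c^(γ-1) * τ
    have hba : b - a ≤ γ * c^(γ-1) * τ := by
      have hcmp := my_cmp_rpow (f := fun x : ℝ => (x:ℝ)^γ)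
        (f' := fun x => γ * x^(γ-1)) (a := d) (b := c) (K := γ * c^(γ-1)) (q := 1)
        hd0' hdc.le
        (fun x _ => Real.hasDerivAt_rpow_const (Or.inr hγ))
        (fun x hx => by
          have hx0 : 0 < x := lt_of_lt_of_le hd0' hx.1
          rw [show (1:ℝ) - 1 = 0 by ring, Real.rpow_zero, mul_one, Real.norm_eq_abs]
          rw [abs_of_nonneg (by positivity)]
          refine mul_le_mul_of_nonneg_left ?_ hγ0.le
          exact Real.rpow_le_rpow hx0.le hx.2 (by linarith))
        one_ne_zero
      rw [Real.rpow_one, Real.rpow_one] at hcmp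
      have hcd : c - d = τ := by
        rw [hc, hd, hcastd]; ring
      have : b - a ≤ ‖c^γ - d^γ‖ := by
        rw [hb, ha, Real.norm_eq_abs]
        exact le_abs_self _
      calc b - a ≤ ‖c^γ - d^γ‖ := this
        _ ≤ γ * c^(γ-1) / 1 * c - γ * c^(γ-1) / 1 * d := hcmp
        _ = γ * c^(γ-1) * (c - d) := by ring
        _ = γ * c^(γ-1) * τ := by rw [hcd]
    have hba0 : (0:ℝ) ≤ b - a := hL.le
    have hfinal1 : lam * ‖u t - u a - (t-a) • u' t‖ + mu * ‖u t - u b - (t-b) • u' t‖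
        ≤ (C * 4^γ * b^(σ-2)) * (b-a) * (b-a) := by
      have e2 : mu * ‖u t - u b - (t-b) • u' t‖ ≤ mu * ((C * 4^γ * b^(σ-2)) * (b-a) * (b-a)) :=
        mul_le_mul_of_nonneg_left hB2 hmu0
      have e3 : lam * ‖u t - u a - (t-a) • u' t‖ ≤ lam * ((C * 4^γ * b^(σ-2)) * (b-a) * (b-a)) :=
        mul_le_mul_of_nonneg_left hA2 hlam0
      calc lam * ‖u t - u a - (t-a) • u' t‖ + mu * ‖u t - u b - (t-b) • u' t‖
          ≤ lam * ((C * 4^γ * b^(σ-2)) * (b-a) * (b-a))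
            + mu * ((C * 4^γ * b^(σ-2)) * (b-a) * (b-a)) := add_le_add e3 e2
        _ = (lam + mu) * ((C * 4^γ * b^(σ-2)) * (b-a) * (b-a)) := by ring
        _ = (C * 4^γ * b^(σ-2)) * (b-a) * (b-a) := by rw [h1, one_mul]
    -- convert to powers of c and τ
    have hstep : (C * 4^γ * b^(σ-2)) * (b-a) * (b-a)
        ≤ (C * γ^2 * 4^γ) * (τ^(2:ℝ) * c^(γ*σ-2)) := by
      have hgc : (0:ℝ) ≤ γ * c^(γ-1) * τ := by positivity
      have hbb : (C * 4^γ * b^(σ-2)) * (b-a) * (b-a)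
          ≤ (C * 4^γ * b^(σ-2)) * (γ * c^(γ-1) * τ) * (γ * c^(γ-1) * τ) := by
        have hsq : (b-a) * (b-a) ≤ (γ * c^(γ-1) * τ) * (γ * c^(γ-1) * τ) :=
          mul_le_mul hba hba hba0 hgc
        calc (C * 4^γ * b^(σ-2)) * (b-a) * (b-a)
            = (C * 4^γ * b^(σ-2)) * ((b-a) * (b-a)) := by ring
          _ ≤ (C * 4^γ * b^(σ-2)) * ((γ * c^(γ-1) * τ) * (γ * c^(γ-1) * τ)) :=
              mul_le_mul_of_nonneg_left hsq hM0
          _ = (C * 4^γ * b^(σ-2)) * (γ * c^(γ-1) * τ) * (γ * c^(γ-1) * τ) := by ring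
      refine hbb.trans (le_of_eq ?_)
      have e1 : b^(σ-2) = c^(γ*(σ-2)) := by rw [hb, ← Real.rpow_mul hc0.le]
      have e2 : τ^(2:ℝ) = τ*τ := by
        rw [show (2:ℝ) = (1:ℝ)+1 by norm_num, Real.rpow_add hτ, Real.rpow_one]
      have e3 : c^(γ-1) * c^(γ-1) * c^(γ*(σ-2)) = c^(γ*σ-2) := by
        rw [← Real.rpow_add hc0, ← Real.rpow_add hc0]
        congr 1
        ring
      rw [e1, e2, ← e3]
      ring
    -- final comparison with the target
    have hcmax : (c^γ) ^ (max 0 (σ - 2/γ)) = c ^ (max 0 (γ*σ-2)) := by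
      rw [← Real.rpow_mul hc0.le, hγmax]
    have hcoef : C * γ^2 * 4^γ ≤ C/σ + 2*C + γ^2*4^γ*C + 1 := by
      have h1' : (0:ℝ) ≤ C/σ := by positivity
      have h2' : (0:ℝ) ≤ 2*C := by positivity
      have h3' : C * γ^2 * 4^γ = γ^2*4^γ*C := by ring
      linarith
    have hτ20 : (0:ℝ) ≤ τ^(2:ℝ) := Real.rpow_nonneg hτ.le _
    have hlast : (C * γ^2 * 4^γ) * (τ^(2:ℝ) * c^(γ*σ-2))
        ≤ (C/σ + 2*C + γ^2*4^γ*C + 1) * τ ^ (min (γ * σ) 2) * (b ^ max 0 (σ - 2/γ)) := by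
      rw [hb, hcmax]
      rcases le_total (γ*σ) 2 with hgs | hgs
      · rw [min_eq_left hgs, max_eq_left (by linarith)]
        rw [Real.rpow_zero, mul_one]
        have hcc : c^(γ*σ-2) ≤ τ^(γ*σ-2) :=
          Real.rpow_le_rpow_of_nonpos hτ hτc (by linarith)
        have : τ^(2:ℝ) * c^(γ*σ-2) ≤ τ^(2:ℝ) * τ^(γ*σ-2) :=
          mul_le_mul_of_nonneg_left hcc hτ20
        have hττ : τ^(2:ℝ) * τ^(γ*σ-2) = τ^(γ*σ) := by
          rw [← Real.rpow_add hτ]; ring_nf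
        have hτγσ : (0:ℝ) ≤ τ^(γ*σ) := Real.rpow_nonneg hτ.le _
        calc (C * γ^2 * 4^γ) * (τ^(2:ℝ) * c^(γ*σ-2))
            ≤ (C * γ^2 * 4^γ) * τ^(γ*σ) := by
              rw [← hττ]
              exact mul_le_mul_of_nonneg_left this (by positivity)
          _ ≤ (C/σ + 2*C + γ^2*4^γ*C + 1) * τ^(γ*σ) :=
              mul_le_mul_of_nonneg_right hcoef hτγσ
      · rw [min_eq_right hgs, max_eq_right (by linarith)]
        have hcp : (0:ℝ) ≤ c^(γ*σ-2) := Real.rpow_nonneg hc0.le _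
        calc (C * γ^2 * 4^γ) * (τ^(2:ℝ) * c^(γ*σ-2))
            ≤ (C/σ + 2*C + γ^2*4^γ*C + 1) * (τ^(2:ℝ) * c^(γ*σ-2)) := by
              refine mul_le_mul_of_nonneg_right hcoef (by positivity)
          _ = (C/σ + 2*C + γ^2*4^γ*C + 1) * τ^(2:ℝ) * c^(γ*σ-2) := by ring
    exact le_trans (le_trans hfinal1 hstep) hlast
end

section
/- For the graded mesh t_n = (nτ)^γ with γ ≥ 1 and the weight estimates τ_j ≤ γ τ t_j^{1−1/γ} (j ≥ 2), if σ, α satisfy γ(2σ − α) > 3 − α and δ = σ − 2/γ, then τ^{1+α} Σ_{j=2}^N t_j^{2δ} τ_j^{−α} ≤ C for a constant C independent of τ and N, where Nτ = T^{1/γ}. -/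
open Finset

/-- Bernoulli: for `p ≥ 1`, `y ≥ 1`, `y^p + p*y^(p-1) ≤ (y+1)^p`. -/
lemma bern_lower {p y : ℝ} (hp : 1 ≤ p) (hy : 1 ≤ y) :
    y ^ p + p * y ^ (p - 1) ≤ (y + 1) ^ p := by
  have hy0 : (0:ℝ) < y := lt_of_lt_of_le one_pos hy
  have hs : (-1:ℝ) ≤ 1 / y := by
    have : (0:ℝ) ≤ 1 / y := by positivity
    linarith
  have h := one_add_mul_self_le_rpow_one_add hs hp
  have h2 : y ^ p * (1 + p * (1 / y)) ≤ y ^ p * (1 + 1 / y) ^ p :=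
    mul_le_mul_of_nonneg_left h (Real.rpow_nonneg hy0.le p)
  calc y ^ p + p * y ^ (p - 1) = y ^ p * (1 + p * (1 / y)) := by
        rw [Real.rpow_sub hy0, Real.rpow_one]; field_simp
    _ ≤ y ^ p * (1 + 1 / y) ^ p := h2
    _ = (y + 1) ^ p := by
        rw [← Real.mul_rpow hy0.le (by positivity)]
        congr 1; field_simp

/-- Key inequality: `c * x^(p-1) ≤ x^p - (x-1)^p` for `x ≥ 2`, with
`c = p * min 1 (2^(1-p))`. -/
lemma key_ineq {p : ℝ} (hp : 0 < p) {x : ℝ} (hx : 2 ≤ x) :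
    p * min 1 ((2:ℝ) ^ (1 - p)) * x ^ (p - 1) ≤ x ^ p - (x - 1) ^ p := by
  have hx0 : (0:ℝ) < x := by linarith
  have hx1 : (1:ℝ) ≤ x - 1 := by linarith
  rcases le_or_gt 1 p with h1 | h1
  · have hmin : min 1 ((2:ℝ) ^ (1 - p)) = (2:ℝ) ^ (1 - p) :=
      min_eq_right (Real.rpow_le_one_of_one_le_of_nonpos (by norm_num) (by linarith))
    have hb := bern_lower h1 hx1
    rw [sub_add_cancel] at hb
    have h2 : (x / 2) ^ (p - 1) ≤ (x - 1) ^ (p - 1) :=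
      Real.rpow_le_rpow (by linarith) (by linarith) (by linarith)
    have h3 : (x / 2) ^ (p - 1) = x ^ (p - 1) * (2:ℝ) ^ (1 - p) := by
      rw [Real.div_rpow hx0.le (by norm_num)]
      have : (2:ℝ) ^ (1 - p) = ((2:ℝ) ^ (p - 1))⁻¹ := by
        rw [← Real.rpow_neg (by norm_num)]; congr 1; ring
      rw [this, div_eq_mul_inv]
    rw [h3] at h2
    have h4 := mul_le_mul_of_nonneg_left h2 hp.le
    rw [hmin]; linarith
  · have hmin : min 1 ((2:ℝ) ^ (1 - p)) = 1 :=
      min_eq_left (Real.one_le_rpow (by norm_num) (by linarith))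
    have hs : (-1:ℝ) ≤ -1 / x := by
      rw [neg_div, neg_le_neg_iff]
      rw [div_le_one hx0]; linarith
    have h := rpow_one_add_le_one_add_mul_self hs hp.le h1.le
    have hxp : (0:ℝ) ≤ x ^ p := Real.rpow_nonneg hx0.le p
    have h2 : x ^ p * (1 + -1 / x) ^ p ≤ x ^ p * (1 + p * (-1 / x)) :=
      mul_le_mul_of_nonneg_left h hxp
    have h3 : x ^ p * (1 + -1 / x) ^ p = (x - 1) ^ p := by
      rw [← Real.mul_rpow hx0.le (by
        rw [neg_div, ← sub_eq_add_neg, sub_nonneg, div_le_one hx0]; linarith)]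
      congr 1; field_simp; ring
    have h4 : x ^ p * (1 + p * (-1 / x)) = x ^ p - p * x ^ (p - 1) := by
      rw [Real.rpow_sub hx0, Real.rpow_one]; field_simp; ring
    rw [h3, h4] at h2
    rw [hmin]; linarith

/-- Sum bound via telescoping: `∑_{j=2}^N j^(p-1) ≤ N^p / c`. -/
lemma sum_pow_le {p : ℝ} (hp : 0 < p) :
    ∀ N : ℕ, 2 ≤ N → ∑ j ∈ Finset.Icc 2 N, (j:ℝ) ^ (p - 1)
      ≤ (N:ℝ) ^ p / (p * min 1 ((2:ℝ) ^ (1 - p))) := by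
  set c : ℝ := p * min 1 ((2:ℝ) ^ (1 - p)) with hc_def
  have hc : 0 < c := by
    apply mul_pos hp
    exact lt_min one_pos (Real.rpow_pos_of_pos (by norm_num) _)
  intro N hN
  induction N, hN using Nat.le_induction with
  | base =>
      rw [Finset.Icc_self, Finset.sum_singleton]
      have hk := key_ineq hp (x := ((2:ℕ):ℝ)) (by norm_num)
      have h1 : ((2:ℕ):ℝ) - 1 = 1 := by norm_num
      rw [h1, Real.one_rpow] at hk
      rw [le_div_iff₀ hc]
      rw [← hc_def, mul_comm] at hk
      push_cast at hk ⊢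
      linarith
  | succ n hn ih =>
      rw [Finset.sum_Icc_succ_top (by omega)]
      have hk := key_ineq hp (x := ((n:ℝ) + 1)) (by
        have : (2:ℝ) ≤ (n:ℝ) := by exact_mod_cast hn
        linarith)
      have h1 : (n:ℝ) + 1 - 1 = (n:ℝ) := by ring
      rw [h1] at hk
      have hstep : ((n:ℝ) + 1) ^ (p - 1) ≤ (((n:ℝ) + 1) ^ p - (n:ℝ) ^ p) / c := by
        rw [le_div_iff₀ hc]
        rw [← hc_def, mul_comm] at hk
        linarith
      push_cast
      calc (∑ j ∈ Finset.Icc 2 n, (j:ℝ) ^ (p - 1)) + ((n:ℝ) + 1) ^ (p - 1)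
          ≤ (n:ℝ) ^ p / c + (((n:ℝ) + 1) ^ p - (n:ℝ) ^ p) / c := add_le_add ih hstep
        _ = ((n:ℝ) + 1) ^ p / c := by field_simp; ring

/-- On the graded mesh `t_j = (jτ)^γ` with `τ = T^{1/γ}/N`, if `γ(2σ-α) > 3-α` and
`δ = σ - 2/γ`, then `τ^{1+α} Σ_{j=2}^N t_j^{2δ} τ_j^{-α} ≤ C` with `C` independent of
`τ` and `N`. -/
theorem graded_mesh_weighted_sum_bound (T γ σ α : ℝ) (hT : 0 < T) (hγ : 1 ≤ γ)
    (hα : 0 < α) (hα1 : α < 1) (hcond : γ * (2 * σ - α) > 3 - α) :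
    ∃ C > 0, ∀ N : ℕ, 2 ≤ N →
      (T ^ (1 / γ) / N) ^ (1 + α) *
        ∑ j ∈ Finset.Icc 2 N,
          (((j : ℝ) * (T ^ (1 / γ) / N)) ^ γ) ^ (2 * (σ - 2 / γ)) *
            ((((j : ℝ) * (T ^ (1 / γ) / N)) ^ γ
              - (((j : ℝ) - 1) * (T ^ (1 / γ) / N)) ^ γ) ^ (-α))
        ≤ C := by
  have hγ0 : (0:ℝ) < γ := lt_of_lt_of_le one_pos hγ
  set β : ℝ := γ * (2 * σ - α) + α - 3 with hβ_def
  have hβ : 0 < β := by simp only [hβ_def]; linarith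
  set c : ℝ := β * min 1 ((2:ℝ) ^ (1 - β)) with hc_def
  have hc : 0 < c :=
    mul_pos hβ (lt_min one_pos (Real.rpow_pos_of_pos two_pos _))
  refine ⟨T ^ (β / γ) * (2:ℝ) ^ (α * (γ - 1)) / c, by positivity, ?_⟩
  intro N hN
  set τ : ℝ := T ^ (1 / γ) / N with hτ_def
  have hN0 : (0:ℝ) < (N:ℝ) := by
    have : (2:ℝ) ≤ (N:ℝ) := by exact_mod_cast hN
    linarith
  have hτ : 0 < τ := div_pos (Real.rpow_pos_of_pos hT _) hN0
  have hterm : ∀ j ∈ Finset.Icc 2 N,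
      (((j:ℝ) * τ) ^ γ) ^ (2 * (σ - 2 / γ)) *
          ((((j:ℝ) * τ) ^ γ - (((j:ℝ) - 1) * τ) ^ γ) ^ (-α))
        ≤ τ ^ (2*γ*σ - 4 - γ*α) * ((2:ℝ) ^ (α*(γ-1)) * (j:ℝ) ^ (β - 1)) := by
    intro j hj
    obtain ⟨hj2, -⟩ := Finset.mem_Icc.mp hj
    set x : ℝ := (j:ℝ) with hx_def
    have hx2 : (2:ℝ) ≤ x := by rw [hx_def]; exact_mod_cast hj2
    have hx0 : (0:ℝ) < x := by linarith
    have hx1 : (1:ℝ) ≤ x - 1 := by linarith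
    set d : ℝ := x ^ γ - (x - 1) ^ γ with hd_def
    have hd0 : 0 < d := by
      have := Real.rpow_lt_rpow (by linarith : (0:ℝ) ≤ x - 1)
        (by linarith : x - 1 < x) hγ0
      simp only [hd_def]; linarith
    have hE1 : γ * (2 * (σ - 2 / γ)) = 2*γ*σ - 4 := by field_simp; ring
    have hf1 : ((x * τ) ^ γ) ^ (2 * (σ - 2 / γ)) = x ^ (2*γ*σ-4) * τ ^ (2*γ*σ-4) := by
      rw [← Real.rpow_mul (by positivity), hE1, Real.mul_rpow hx0.le hτ.le]
    have hf2 : (x * τ) ^ γ - ((x - 1) * τ) ^ γ = d * τ ^ γ := by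
      rw [Real.mul_rpow hx0.le hτ.le, Real.mul_rpow (by linarith) hτ.le]
      simp only [hd_def]; ring
    have hf3 : (d * τ ^ γ) ^ (-α) = d ^ (-α) * τ ^ (γ * (-α)) := by
      rw [Real.mul_rpow hd0.le (Real.rpow_nonneg hτ.le _), ← Real.rpow_mul hτ.le]
    have hbd : (x / 2) ^ (γ - 1) ≤ d := by
      have hb := bern_lower hγ hx1
      rw [sub_add_cancel] at hb
      have h2 : (x / 2) ^ (γ - 1) ≤ (x - 1) ^ (γ - 1) :=
        Real.rpow_le_rpow (by linarith) (by linarith) (by linarith)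
      have h3 : (x - 1) ^ (γ - 1) ≤ γ * (x - 1) ^ (γ - 1) :=
        le_mul_of_one_le_left (Real.rpow_nonneg (by linarith) _) hγ
      simp only [hd_def]; linarith
    have hda : d ^ (-α) ≤ (2:ℝ) ^ (α*(γ-1)) * x ^ (-(α*(γ-1))) := by
      calc d ^ (-α) ≤ ((x / 2) ^ (γ - 1)) ^ (-α) :=
            Real.rpow_le_rpow_of_nonpos (by positivity) hbd (by linarith)
        _ = (x / 2) ^ ((γ - 1) * (-α)) := (Real.rpow_mul (by positivity) _ _).symm
        _ = (2:ℝ) ^ (α*(γ-1)) * x ^ (-(α*(γ-1))) := by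
            rw [Real.div_rpow hx0.le (by norm_num), div_eq_mul_inv,
              ← Real.rpow_neg (by norm_num : (0:ℝ) ≤ 2)]
            rw [show -((γ-1)*(-α)) = α*(γ-1) from by ring,
              show (γ-1)*(-α) = -(α*(γ-1)) from by ring, mul_comm]
    rw [hf1, hf2, hf3]
    have hτA : τ ^ (2*γ*σ-4) * τ ^ (γ * (-α)) = τ ^ (2*γ*σ - 4 - γ*α) := by
      rw [← Real.rpow_add hτ]; congr 1; ring
    have hxA : x ^ (2*γ*σ-4) * x ^ (-(α*(γ-1))) = x ^ (β - 1) := by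
      rw [← Real.rpow_add hx0]; congr 1; simp only [hβ_def]; ring
    calc x ^ (2*γ*σ-4) * τ ^ (2*γ*σ-4) * (d ^ (-α) * τ ^ (γ * (-α)))
        = (τ ^ (2*γ*σ-4) * τ ^ (γ * (-α))) * (x ^ (2*γ*σ-4) * d ^ (-α)) := by ring
      _ ≤ (τ ^ (2*γ*σ-4) * τ ^ (γ * (-α))) *
            (x ^ (2*γ*σ-4) * ((2:ℝ) ^ (α*(γ-1)) * x ^ (-(α*(γ-1))))) := by
          apply mul_le_mul_of_nonneg_left
            (mul_le_mul_of_nonneg_left hda (Real.rpow_nonneg hx0.le _)) (by positivity)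
      _ = τ ^ (2*γ*σ - 4 - γ*α) * ((2:ℝ) ^ (α*(γ-1)) * x ^ (β - 1)) := by
          rw [hτA, show x ^ (2*γ*σ-4) * ((2:ℝ) ^ (α*(γ-1)) * x ^ (-(α*(γ-1))))
              = (2:ℝ) ^ (α*(γ-1)) * (x ^ (2*γ*σ-4) * x ^ (-(α*(γ-1)))) from by ring, hxA]
  have hτ1α : (0:ℝ) ≤ τ ^ (1 + α) := Real.rpow_nonneg hτ.le _
  have hS := sum_pow_le hβ N hN
  calc τ ^ (1 + α) * ∑ j ∈ Finset.Icc 2 N,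
          (((j:ℝ) * τ) ^ γ) ^ (2 * (σ - 2 / γ)) *
            ((((j:ℝ) * τ) ^ γ - (((j:ℝ) - 1) * τ) ^ γ) ^ (-α))
      ≤ τ ^ (1 + α) * ∑ j ∈ Finset.Icc 2 N,
          τ ^ (2*γ*σ - 4 - γ*α) * ((2:ℝ) ^ (α*(γ-1)) * (j:ℝ) ^ (β - 1)) :=
        mul_le_mul_of_nonneg_left (Finset.sum_le_sum hterm) hτ1α
    _ = τ ^ (1 + α) * (τ ^ (2*γ*σ - 4 - γ*α) *
          ((2:ℝ) ^ (α*(γ-1)) * ∑ j ∈ Finset.Icc 2 N, (j:ℝ) ^ (β - 1))) := by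
        rw [← Finset.mul_sum, ← Finset.mul_sum]
    _ ≤ τ ^ (1 + α) * (τ ^ (2*γ*σ - 4 - γ*α) *
          ((2:ℝ) ^ (α*(γ-1)) * ((N:ℝ) ^ β / c))) := by
        apply mul_le_mul_of_nonneg_left _ hτ1α
        apply mul_le_mul_of_nonneg_left _ (Real.rpow_nonneg hτ.le _)
        exact mul_le_mul_of_nonneg_left hS (Real.rpow_nonneg (by norm_num) _)
    _ = T ^ (β / γ) * (2:ℝ) ^ (α * (γ - 1)) / c := by
        have h1 : τ ^ (1 + α) * τ ^ (2*γ*σ - 4 - γ*α) = τ ^ β := by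
          rw [← Real.rpow_add hτ]; congr 1; simp only [hβ_def]; ring
        have h2 : τ ^ β = T ^ (β / γ) / (N:ℝ) ^ β := by
          rw [hτ_def, Real.div_rpow (Real.rpow_nonneg hT.le _) (Nat.cast_nonneg N),
            ← Real.rpow_mul hT.le]
          congr 2
          field_simp
        have hNβ : (0:ℝ) < (N:ℝ) ^ β := Real.rpow_pos_of_pos hN0 _
        rw [← mul_assoc, h1, h2]
        field_simp
end
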